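/- Any real-valued logic that is an extension of Gödel logic satisfies P1: if L = Taut(T,*) for some continuous t-norm * and algebra of truth values T, and Taut([0,1],min) ⊆ L, then L satisfies P1. -/

import Mathlib

open Set

noncomputable section

/-- The real unit interval `[0,1]` as a subset of `ℝ`. -/
def I01 : Set ℝ := Set.Icc 0 1

/-- A continuous t-norm on `[0,1]`. -/
structure ContTNorm where
  mul : ℝ → ℝ → ℝ
  maps_to : ∀ x ∈ I01, ∀ y ∈ I01, mul x y ∈ I01
  continuousOn : ContinuousOn (fun p : ℝ × ℝ => mul p.1 p.2) (I01 ×ˢ I01)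
  assoc : ∀ x ∈ I01, ∀ y ∈ I01, ∀ z ∈ I01, mul (mul x y) z = mul x (mul y z)
  comm : ∀ x ∈ I01, ∀ y ∈ I01, mul x y = mul y x
  mono : ∀ a ∈ I01, ∀ b ∈ I01, ∀ c ∈ I01, b ≤ c → mul a b ≤ mul a c
  one_mul' : ∀ x ∈ I01, mul 1 x = x

/-- The residuum of a t-norm: `x →* y := sup { c ∈ [0,1] | x * c ≤ y }`. -/
def resid (t : ContTNorm) (x y : ℝ) : ℝ :=
  sSup {c | c ∈ I01 ∧ t.mul x c ≤ y}

/-- An algebra of truth values for the t-norm `t`: a subset of `[0,1]` containing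
`0` and `1` and closed under `t.mul` and its residuum. -/
structure TruthAlg (t : ContTNorm) where
  carrier : Set ℝ
  subset : carrier ⊆ I01
  zero_mem : (0:ℝ) ∈ carrier
  one_mem : (1:ℝ) ∈ carrier
  mul_mem : ∀ x ∈ carrier, ∀ y ∈ carrier, t.mul x y ∈ carrier
  resid_mem : ∀ x ∈ carrier, ∀ y ∈ carrier, resid t x y ∈ carrier

/-- Propositional formulas over countably many variables with `&`, `→`, `⊥`. -/
inductive Formula : Type
  | var : ℕ → Formula
  | bot : Formula
  | conj : Formula → Formula → Formula
  | impl : Formula → Formula → Formula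

/-- `α ↔ β := (α → β) & (β → α)`. -/
def Formula.iff (a b : Formula) : Formula := .conj (.impl a b) (.impl b a)

/-- The valuation determined by an assignment `v` of reals to the variables. -/
def eval (t : ContTNorm) (v : ℕ → ℝ) : Formula → ℝ
  | .var i => v i
  | .bot => 0
  | .conj a b => t.mul (eval t v a) (eval t v b)
  | .impl a b => resid t (eval t v a) (eval t v b)

/-- A valuation into `(T, t)` is (identified with) an assignment of values of `T`
to the propositional variables. -/
def IsValuation (t : ContTNorm) (T : TruthAlg t) (v : ℕ → ℝ) : Prop :=
  ∀ i, v i ∈ T.carrier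

/-- The logic induced by `(T, t)`: all formulas true to degree 1 under every valuation. -/
def Taut (t : ContTNorm) (T : TruthAlg t) : Set Formula :=
  {α | ∀ v : ℕ → ℝ, IsValuation t T v → eval t v α = 1}

/-- Principle P1. -/
def P1 (L : Set Formula) : Prop :=
  ∀ (t : ContTNorm) (T : TruthAlg t), Taut t T = L →
    ∀ α β : Formula,
      (Formula.iff α β ∈ L ↔
        ∀ v : ℕ → ℝ, IsValuation t T v → (eval t v α = 1 ↔ eval t v β = 1))

/-- Principle P2. -/
def P2 (L : Set Formula) : Prop :=
  ∀ (t : ContTNorm) (T : TruthAlg t), Taut t T = L →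
    ∀ v w : ℕ → ℝ, IsValuation t T v → IsValuation t T w → v ≠ w →
      ∃ α : Formula, 0 < eval t v α ∧ eval t w α = 0

/-- The Gödel t-norm: minimum. -/
def minT : ContTNorm where
  mul := fun x y => min x y
  maps_to := by
    rintro x ⟨hx0, hx1⟩ y ⟨hy0, hy1⟩
    exact ⟨le_min hx0 hy0, min_le_of_left_le hx1⟩
  continuousOn := (continuous_fst.min continuous_snd).continuousOn
  assoc := fun x _ y _ z _ => min_assoc x y z
  comm := fun x _ y _ => min_comm x y
  mono := fun a _ b _ c _ h => min_le_min le_rfl h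
  one_mul' := by rintro x ⟨hx0, hx1⟩; exact min_eq_right hx1

/-- The Łukasiewicz t-norm: `x ⊙ y = max 0 (x + y - 1)`. -/
def lukT : ContTNorm where
  mul := fun x y => max 0 (x + y - 1)
  maps_to := by
    rintro x ⟨hx0, hx1⟩ y ⟨hy0, hy1⟩
    exact ⟨le_max_left _ _, max_le zero_le_one (by linarith)⟩
  continuousOn :=
    (continuous_const.max ((continuous_fst.add continuous_snd).sub continuous_const)).continuousOn
  assoc := by
    rintro x ⟨hx0, hx1⟩ y ⟨hy0, hy1⟩ z ⟨hz0, hz1⟩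
    simp only [max_def]
    split_ifs <;> linarith
  comm := by intro x _ y _; rw [add_comm]
  mono := by
    rintro a _ b _ c _ h
    exact max_le_max le_rfl (by linarith)
  one_mul' := by
    rintro x ⟨hx0, hx1⟩
    rw [show (1:ℝ) + x - 1 = x by ring, max_eq_right hx0]

/-- The product t-norm: ordinary multiplication. -/
def prodT : ContTNorm where
  mul := fun x y => x * y
  maps_to := by
    rintro x ⟨hx0, hx1⟩ y ⟨hy0, hy1⟩
    exact ⟨mul_nonneg hx0 hy0, by nlinarith⟩
  continuousOn := (continuous_fst.mul continuous_snd).continuousOn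
  assoc := fun x _ y _ z _ => mul_assoc x y z
  comm := fun x _ y _ => mul_comm x y
  mono := by rintro a ⟨ha0, _⟩ b _ c _ h; exact mul_le_mul_of_nonneg_left h ha0
  one_mul' := fun x _ => one_mul x

lemma ContTNorm.mul_zero' (t : ContTNorm) {x : ℝ} (hx : x ∈ I01) : t.mul x 0 = 0 := by
  have h01 : (0:ℝ) ∈ I01 := ⟨le_rfl, zero_le_one⟩
  have h11 : (1:ℝ) ∈ I01 := ⟨zero_le_one, le_rfl⟩
  have h1 : t.mul x 0 = t.mul 0 x := t.comm x hx 0 h01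
  have h2 : t.mul 0 x ≤ t.mul 0 1 := t.mono 0 h01 x hx 1 h11 hx.2
  have h3 : t.mul 0 1 = t.mul 1 0 := t.comm 0 h01 1 h11
  have h4 : t.mul 1 0 = 0 := t.one_mul' 0 h01
  have h5 : t.mul x 0 ∈ I01 := t.maps_to x hx 0 h01
  rw [h3, h4] at h2
  rw [h1] at h5 ⊢
  exact le_antisymm h2 h5.1

lemma resid_mem_I01 (t : ContTNorm) {x y : ℝ} (hx : x ∈ I01) (hy : y ∈ I01) :
    resid t x y ∈ I01 := by
  have h01 : (0:ℝ) ∈ I01 := ⟨le_rfl, zero_le_one⟩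
  have h0 : (0:ℝ) ∈ {c | c ∈ I01 ∧ t.mul x c ≤ y} :=
    ⟨h01, by rw [t.mul_zero' hx]; exact hy.1⟩
  have hbdd : BddAbove {c | c ∈ I01 ∧ t.mul x c ≤ y} := ⟨1, fun c hc => hc.1.2⟩
  constructor
  · exact le_csSup hbdd h0
  · exact csSup_le ⟨0, h0⟩ fun c hc => hc.1.2

/-- The full algebra of truth values `[0,1]` for a t-norm `t`. -/
def fullAlg (t : ContTNorm) : TruthAlg t where
  carrier := I01
  subset := le_rfl
  zero_mem := ⟨le_rfl, zero_le_one⟩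
  one_mem := ⟨zero_le_one, le_rfl⟩
  mul_mem := t.maps_to
  resid_mem := fun _ hx _ hy => resid_mem_I01 t hx hy

lemma resid_eq_one_of_le (t : ContTNorm) {x y : ℝ} (hx : x ∈ I01) (hy : y ∈ I01)
    (hxy : x ≤ y) : resid t x y = 1 := by
  have h11 : (1:ℝ) ∈ I01 := ⟨zero_le_one, le_rfl⟩
  have hmul : t.mul x 1 = x := by rw [t.comm x hx 1 h11]; exact t.one_mul' x hx
  have h1 : (1:ℝ) ∈ {c | c ∈ I01 ∧ t.mul x c ≤ y} := ⟨h11, by rw [hmul]; exact hxy⟩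
  have hbdd : BddAbove {c | c ∈ I01 ∧ t.mul x c ≤ y} := ⟨1, fun c hc => hc.1.2⟩
  exact le_antisymm (csSup_le ⟨1, h1⟩ fun c hc => hc.1.2) (le_csSup hbdd h1)

lemma resid_one_zero (t : ContTNorm) : resid t 1 0 = 0 := by
  have : {c | c ∈ I01 ∧ t.mul 1 c ≤ 0} = {0} := by
    ext c
    constructor
    · rintro ⟨hc, hle⟩
      have := t.one_mul' c hc
      have := hc.1
      simp only [Set.mem_singleton_iff]
      linarith [this, (t.one_mul' c hc) ▸ hle]
    · rintro rfl
      exact ⟨⟨le_rfl, zero_le_one⟩, by rw [t.mul_zero' ⟨zero_le_one, le_rfl⟩]⟩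
  rw [resid, this, csSup_singleton]

/-- The two-element algebra of truth values `{0,1}`. -/
def boolAlg (t : ContTNorm) : TruthAlg t where
  carrier := {0, 1}
  subset := by
    rintro x (rfl | rfl)
    · exact ⟨le_rfl, zero_le_one⟩
    · exact ⟨zero_le_one, le_rfl⟩
  zero_mem := Or.inl rfl
  one_mem := Or.inr rfl
  mul_mem := by
    have h01 : (0:ℝ) ∈ I01 := ⟨le_rfl, zero_le_one⟩
    have h11 : (1:ℝ) ∈ I01 := ⟨zero_le_one, le_rfl⟩
    rintro x (rfl | rfl) y (rfl | rfl)
    · exact Or.inl (t.mul_zero' h01)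
    · exact Or.inl (by rw [t.comm 0 h01 1 h11]; exact t.mul_zero' h11)
    · exact Or.inl (t.mul_zero' h11)
    · exact Or.inr (t.one_mul' 1 h11)
  resid_mem := by
    have h01 : (0:ℝ) ∈ I01 := ⟨le_rfl, zero_le_one⟩
    have h11 : (1:ℝ) ∈ I01 := ⟨zero_le_one, le_rfl⟩
    rintro x (rfl | rfl) y (rfl | rfl)
    · exact Or.inr (resid_eq_one_of_le t h01 h01 le_rfl)
    · exact Or.inr (resid_eq_one_of_le t h01 h11 zero_le_one)
    · exact Or.inl (resid_one_zero t)
    · exact Or.inr (resid_eq_one_of_le t h11 h11 le_rfl)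

/-- Classical logic: the logic induced by the two-element algebra `{0,1}`
(this is independent of the chosen continuous t-norm). -/
def ClassicalLogic : Set Formula := Taut minT (boolAlg minT)


lemma mem_I01_zero : (0:ℝ) ∈ I01 := ⟨le_rfl, zero_le_one⟩
lemma mem_I01_one : (1:ℝ) ∈ I01 := ⟨zero_le_one, le_rfl⟩

lemma ContTNorm.mul_le_right (t : ContTNorm) {x y : ℝ} (hx : x ∈ I01) (hy : y ∈ I01) :
    t.mul x y ≤ y := by
  have h1 : t.mul x y ≤ t.mul y 1 := by
    rw [t.comm x hx y hy]; exact t.mono y hy x hx 1 mem_I01_one hx.2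
  rw [t.comm y hy 1 mem_I01_one, t.one_mul' y hy] at h1; exact h1

lemma ContTNorm.mul_le_left (t : ContTNorm) {x y : ℝ} (hx : x ∈ I01) (hy : y ∈ I01) :
    t.mul x y ≤ x := by
  rw [t.comm x hx y hy]; exact t.mul_le_right hy hx

lemma eval_mem (t : ContTNorm) (T : TruthAlg t) {v : ℕ → ℝ} (hv : IsValuation t T v) :
    ∀ γ : Formula, eval t v γ ∈ T.carrier
  | .var i => hv i
  | .bot => T.zero_mem
  | .conj a b => T.mul_mem _ (eval_mem t T hv a) _ (eval_mem t T hv b)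
  | .impl a b => T.resid_mem _ (eval_mem t T hv a) _ (eval_mem t T hv b)

lemma resid_attained (t : ContTNorm) {x y : ℝ} (hx : x ∈ I01) (hy0 : 0 ≤ y) :
    t.mul x (resid t x y) ≤ y := by
  set S : Set ℝ := {c | c ∈ I01 ∧ t.mul x c ≤ y} with hS
  have hSeq : S = I01 ∩ (fun c => t.mul x c) ⁻¹' Set.Iic y := by
    ext c; simp [hS, Set.mem_Iic, and_comm]
  have hcont : ContinuousOn (fun c => t.mul x c) I01 := by
    have : ContinuousOn (fun c : ℝ => (x, c)) I01 :=
      (continuous_const.prodMk continuous_id).continuousOn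
    exact t.continuousOn.comp this (fun c hc => Set.mk_mem_prod hx hc)
  have hclosed : IsClosed S := by
    rw [hSeq]
    exact hcont.preimage_isClosed_of_isClosed isClosed_Icc isClosed_Iic
  have h0 : (0:ℝ) ∈ S := ⟨mem_I01_zero, by rw [t.mul_zero' hx]; exact hy0⟩
  have hbdd : BddAbove S := ⟨1, fun c hc => hc.1.2⟩
  have := hclosed.csSup_mem ⟨0, h0⟩ hbdd
  exact this.2

lemma le_of_resid_eq_one (t : ContTNorm) {x y : ℝ} (hx : x ∈ I01) (hy0 : 0 ≤ y)
    (h : resid t x y = 1) : x ≤ y := by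
  have := resid_attained t hx hy0
  rw [h, t.comm x hx 1 mem_I01_one, t.one_mul' x hx] at this
  exact this

lemma idem_mul (t : ContTNorm) {x : ℝ} (hx : x ∈ I01) (hid : t.mul x x = x)
    {y : ℝ} (hy : y ∈ I01) : t.mul x y = min x y := by
  rcases le_total x y with hxy | hyx
  · rw [min_eq_left hxy]
    have h1 : t.mul x y ≤ x := t.mul_le_left hx hy
    have h2 : x ≤ t.mul x y := by
      calc x = t.mul x x := hid.symm
        _ ≤ t.mul x y := t.mono x hx x hx y hy hxy
    linarith
  · rw [min_eq_right hyx]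
    have h1 : t.mul x y ≤ y := t.mul_le_right hx hy
    -- IVT: find z with t.mul x z = y
    have hcont : ContinuousOn (fun c => t.mul x c) (Set.Icc (0:ℝ) 1) := by
      have : ContinuousOn (fun c : ℝ => (x, c)) I01 :=
        (continuous_const.prodMk continuous_id).continuousOn
      exact t.continuousOn.comp this (fun c hc => Set.mk_mem_prod hx hc)
    have hiv := intermediate_value_Icc (zero_le_one) hcont
    have hy' : y ∈ Set.Icc (t.mul x 0) (t.mul x 1) := by
      rw [t.mul_zero' hx, t.comm x hx 1 mem_I01_one, t.one_mul' x hx]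
      exact ⟨hy.1, hyx⟩
    obtain ⟨z, hz, hzeq⟩ := hiv hy'
    have hzeq' : t.mul x z = y := hzeq
    have h2 : t.mul x y = y := by
      calc t.mul x y = t.mul x (t.mul x z) := by rw [hzeq']
        _ = t.mul (t.mul x x) z := (t.assoc x hx x hx z hz).symm
        _ = t.mul x z := by rw [hid]
        _ = y := hzeq'
    exact h2

lemma idem_resid (t : ContTNorm) {x y : ℝ} (hx : x ∈ I01) (hid : t.mul x x = x)
    (hy : y ∈ I01) : resid t x y = if x ≤ y then 1 else y := by
  split_ifs with hxy
  · exact resid_eq_one_of_le t hx hy hxy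
  · push_neg at hxy
    have hSeq : {c | c ∈ I01 ∧ t.mul x c ≤ y} = Set.Icc (0:ℝ) y := by
      ext c
      constructor
      · rintro ⟨hc, hle⟩
        rw [idem_mul t hx hid hc] at hle
        refine ⟨hc.1, ?_⟩
        rcases min_cases x c with ⟨heq, hle2⟩ | ⟨heq, hle2⟩ <;> rw [heq] at hle
        · linarith
        · exact hle
      · rintro ⟨hc0, hcy⟩
        have hc : c ∈ I01 := ⟨hc0, hcy.trans hy.2⟩
        exact ⟨hc, by rw [idem_mul t hx hid hc]; exact min_le_of_right_le hcy⟩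
    rw [resid, hSeq, csSup_Icc hy.1]

lemma gmap_monotone {a : ℝ} (ha1 : a ≤ 1) :
    Monotone (fun x => if a ≤ x then (1:ℝ) else x) := by
  intro x y hxy
  dsimp only
  split_ifs with h1 h2 h2
  · exact le_rfl
  · exact absurd (h1.trans hxy) h2
  · linarith
  · exact hxy

lemma eval_gmap (t : ContTNorm) (T : TruthAlg t)
    (hidem : ∀ x ∈ T.carrier, t.mul x x = x)
    {a : ℝ} (ha0 : 0 < a) (ha1 : a ≤ 1)
    {v : ℕ → ℝ} (hv : IsValuation t T v) :
    ∀ γ : Formula, eval t (fun i => if a ≤ v i then 1 else v i) γ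
      = if a ≤ eval t v γ then 1 else eval t v γ := by
  set g : ℝ → ℝ := fun x => if a ≤ x then 1 else x with hg
  have hgmem : ∀ x ∈ T.carrier, g x ∈ T.carrier := by
    intro x hxm; by_cases hax : a ≤ x <;> simp [hg, hax, T.one_mem, hxm]
  have hv' : IsValuation t T (fun i => g (v i)) := fun i => hgmem _ (hv i)
  have hmono := gmap_monotone ha1
  intro γ
  induction γ with
  | var i => rfl
  | bot => simp [eval, hg, not_le.mpr ha0]
  | conj α β ihα ihβ =>
      have hpm := eval_mem t T hv α
      have hqm := eval_mem t T hv β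
      set p := eval t v α; set q := eval t v β
      have hp : p ∈ I01 := T.subset hpm
      have hq : q ∈ I01 := T.subset hqm
      have hgpm : g p ∈ T.carrier := hgmem _ hpm
      have hgp : g p ∈ I01 := T.subset hgpm
      have hgq : g q ∈ I01 := T.subset (hgmem _ hqm)
      show t.mul _ _ = g (t.mul p q)
      rw [ihα, ihβ]
      show t.mul (g p) (g q) = g (t.mul p q)
      rw [idem_mul t hgp (hidem _ hgpm) hgq, idem_mul t hp (hidem _ hpm) hq]
      exact (hmono.map_min).symm
  | impl α β ihα ihβ =>
      have hpm := eval_mem t T hv α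
      have hqm := eval_mem t T hv β
      set p := eval t v α; set q := eval t v β
      have hp : p ∈ I01 := T.subset hpm
      have hq : q ∈ I01 := T.subset hqm
      have hgpm : g p ∈ T.carrier := hgmem _ hpm
      have hgp : g p ∈ I01 := T.subset hgpm
      have hgq : g q ∈ I01 := T.subset (hgmem _ hqm)
      show resid t _ _ = g (resid t p q)
      rw [ihα, ihβ]
      show resid t (g p) (g q) = g (resid t p q)
      rw [idem_resid t hgp (hidem _ hgpm) hgq, idem_resid t hp (hidem _ hpm) hq]
      by_cases hpq : p ≤ q
      · simp only [hpq, if_true]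
        rw [if_pos (hmono hpq)]
        simp [hg, ha1]
      · rw [if_neg hpq]
        push_neg at hpq
        by_cases haq : a ≤ q
        · have hap : a ≤ p := haq.trans hpq.le
          simp [hg, hap, haq]
        · push_neg at haq
          have : ¬ g p ≤ g q := by
            simp only [hg, if_neg (not_le.mpr haq)]
            by_cases hap : a ≤ p
            · simp only [if_pos hap]; linarith
            · simp only [if_neg hap]; linarith
          rw [if_neg this]

lemma idem_of_godel (t : ContTNorm) (T : TruthAlg t)
    (hG : (Formula.impl (.var 0) (.conj (.var 0) (.var 0))) ∈ Taut t T) :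
    ∀ x ∈ T.carrier, t.mul x x = x := by
  intro x hxm
  have hx : x ∈ I01 := T.subset hxm
  have hv : IsValuation t T (fun _ => x) := fun _ => hxm
  have := hG (fun _ => x) hv
  simp only [eval] at this
  have hmm : t.mul x x ∈ I01 := t.maps_to x hx x hx
  have h1 : x ≤ t.mul x x := le_of_resid_eq_one t hx hmm.1 this
  have h2 : t.mul x x ≤ x := t.mul_le_left hx hx
  linarith

lemma godel_idem_taut :
    (Formula.impl (.var 0) (.conj (.var 0) (.var 0))) ∈ Taut minT (fullAlg minT) := by
  intro v hv
  have hx : v 0 ∈ I01 := hv 0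
  simp only [eval]
  have : minT.mul (v 0) (v 0) = v 0 := min_self _
  rw [this]
  exact resid_eq_one_of_le minT hx hx le_rfl

lemma key_not_lt (t : ContTNorm) (T : TruthAlg t)
    (hidem : ∀ x ∈ T.carrier, t.mul x x = x)
    {v : ℕ → ℝ} (hv : IsValuation t T v) (α β : Formula)
    (hyp : ∀ w : ℕ → ℝ, IsValuation t T w → (eval t w α = 1 ↔ eval t w β = 1)) :
    ¬ (eval t v β < eval t v α) := by
  intro hlt
  set p := eval t v α with hp'
  set q := eval t v β with hq'
  have hpm := eval_mem t T hv α
  have hqm := eval_mem t T hv β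
  have hp : p ∈ I01 := T.subset hpm
  have hq : q ∈ I01 := T.subset hqm
  have hp0 : 0 < p := lt_of_le_of_lt hq.1 hlt
  set g : ℝ → ℝ := fun x => if p ≤ x then 1 else x with hg
  have hv' : IsValuation t T (fun i => g (v i)) := by
    intro i; by_cases hax : p ≤ v i <;> simp [hg, hax, T.one_mem, hv i]
  have heq := eval_gmap t T hidem hp0 hp.2 hv
  have hα : eval t (fun i => g (v i)) α = 1 := by
    rw [heq α, ← hp', if_pos le_rfl]
  have hβ := (hyp _ hv').mp hα
  rw [heq β, ← hq', if_neg (not_le.mpr hlt)] at hβ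
  exact absurd hβ (by linarith [hp.2])

/-- Any real-valued logic extending Gödel logic satisfies P1. -/
theorem extends_Godel_implies_P1 (t : ContTNorm) (T : TruthAlg t)
    (h : Taut minT (fullAlg minT) ⊆ Taut t T) : P1 (Taut t T) := by
  intro t' T' heq α β
  constructor
  · intro hmem v hv
    rw [← heq] at hmem
    have h1 := hmem v hv
    simp only [Formula.iff, eval] at h1
    set p := eval t' v α with hp'
    set q := eval t' v β with hq'
    have hpm := eval_mem t' T' hv α
    have hqm := eval_mem t' T' hv β
    have hp : p ∈ I01 := T'.subset hpm
    have hq : q ∈ I01 := T'.subset hqm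
    have hr1m : resid t' p q ∈ I01 := T'.subset (T'.resid_mem _ hpm _ hqm)
    have hr2m : resid t' q p ∈ I01 := T'.subset (T'.resid_mem _ hqm _ hpm)
    have hr1 : resid t' p q = 1 :=
      le_antisymm hr1m.2 (h1 ▸ t'.mul_le_left hr1m hr2m)
    have hr2 : resid t' q p = 1 :=
      le_antisymm hr2m.2 (h1 ▸ t'.mul_le_right hr1m hr2m)
    have hpq : p = q :=
      le_antisymm (le_of_resid_eq_one t' hp hq.1 hr1)
        (le_of_resid_eq_one t' hq hp.1 hr2)
    rw [hpq]
  · intro hyp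
    rw [← heq]
    intro v hv
    have hG : (Formula.impl (.var 0) (.conj (.var 0) (.var 0))) ∈ Taut t' T' := by
      rw [heq]; exact h godel_idem_taut
    have hidem := idem_of_godel t' T' hG
    have h1 := key_not_lt t' T' hidem hv α β hyp
    have h2 := key_not_lt t' T' hidem hv β α (fun w hw => (hyp w hw).symm)
    have hpq : eval t' v α = eval t' v β := le_antisymm (not_lt.mp h1) (not_lt.mp h2)
    have hqm := eval_mem t' T' hv β
    have hq : eval t' v β ∈ I01 := T'.subset hqm
    simp only [Formula.iff, eval]
    rw [hpq, resid_eq_one_of_le t' hq hq le_rfl]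
    exact t'.one_mul' 1 mem_I01_one

end
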